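/- arXiv:1307.0239 — 2 statements merged into one kernel-verified Lean document; each statement's English description precedes it below -/
import Mathlib

section
/- (The rank count p-value lies strictly inside the rank envelope p-interval.) Define p_- = #{i ∈ {1, …, s+1} : R_i < R_1}/(s+1), p_+ = #{i ∈ {1, …, s+1} : R_i ≤ R_1}/(s+1), and the rank count p-value p_N = (1 + #{i ∈ {2, …, s+1} : N_i ≺ N_1})/(s+1). Then p_- < p_N ≤ p_+. -/
open Finset

/-- The upward pointwise rank `R_i^↑(r) = #{j : T_j(r) ≤ T_i(r)}`. -/
noncomputable def upRank {s : ℕ} {ι : Type*} (T : Fin (s + 1) → ι → ℝ) (i : Fin (s + 1)) (r : ι) : ℕ :=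
  {j : Fin (s + 1) | T j r ≤ T i r}.ncard

/-- The downward pointwise rank `R_i^↓(r) = #{j : T_j(r) ≥ T_i(r)}`. -/
noncomputable def downRank {s : ℕ} {ι : Type*} (T : Fin (s + 1) → ι → ℝ) (i : Fin (s + 1)) (r : ι) : ℕ :=
  {j : Fin (s + 1) | T i r ≤ T j r}.ncard

/-- The two-sided pointwise rank `R_i^*(r) = min(R_i^↑(r), R_i^↓(r))`. -/
noncomputable def twoSidedRank {s : ℕ} {ι : Type*} (T : Fin (s + 1) → ι → ℝ) (i : Fin (s + 1)) (r : ι) : ℕ :=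
  min (upRank T i r) (downRank T i r)

/-- The extreme rank `R_i = min_{r ∈ I} R_i^*(r)`. -/
noncomputable def extremeRank {s : ℕ} {ι : Type*} [Fintype ι] [Nonempty ι]
    (T : Fin (s + 1) → ι → ℝ) (i : Fin (s + 1)) : ℕ :=
  univ.inf' univ_nonempty (fun r => twoSidedRank T i r)

/-- The rank count `N_{i,k} = #{r ∈ I : R_i^*(r) = k}`. -/
noncomputable def rankCount {s : ℕ} {ι : Type*} [Fintype ι]
    (T : Fin (s + 1) → ι → ℝ) (i : Fin (s + 1)) (k : ℕ) : ℕ :=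
  {r : ι | twoSidedRank T i r = k}.ncard

/-- The reverse lexical strict order on rank count vectors
`N_i = (N_{i,1}, …, N_{i,K})`, `K = ⌊(s+2)/2⌋`: `N_i ≺ N_j` iff there exists `n ≤ K`
with `N_{i,k} = N_{j,k}` for all `k < n` and `N_{i,n} > N_{j,n}`. -/
def rankCountLT {s : ℕ} {ι : Type*} [Fintype ι]
    (T : Fin (s + 1) → ι → ℝ) (i j : Fin (s + 1)) : Prop :=
  ∃ n : ℕ, 1 ≤ n ∧ n ≤ (s + 2) / 2 ∧
    (∀ k, 1 ≤ k → k < n → rankCount T i k = rankCount T j k) ∧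
    rankCount T j n < rankCount T i n

lemma one_le_twoSidedRank {s : ℕ} {ι : Type*} (T : Fin (s + 1) → ι → ℝ) (i : Fin (s + 1)) (r : ι) :
    1 ≤ twoSidedRank T i r := by
  have h1 : 0 < upRank T i r := by
    rw [upRank, Set.ncard_pos (Set.toFinite _)]
    exact ⟨i, Set.mem_setOf_eq ▸ le_refl _⟩
  have h2 : 0 < downRank T i r := by
    rw [downRank, Set.ncard_pos (Set.toFinite _)]
    exact ⟨i, Set.mem_setOf_eq ▸ le_refl _⟩
  exact le_min h1 h2

lemma twoSidedRank_le {s : ℕ} {ι : Type*} (T : Fin (s + 1) → ι → ℝ)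
    (hnoties : ∀ r : ι, ∀ i j : Fin (s + 1), i ≠ j → T i r ≠ T j r)
    (i : Fin (s + 1)) (r : ι) : twoSidedRank T i r ≤ (s + 2) / 2 := by
  have hsum : upRank T i r + downRank T i r = s + 2 := by
    have hu : ({j : Fin (s + 1) | T j r ≤ T i r} ∪ {j : Fin (s + 1) | T i r ≤ T j r}) = Set.univ := by
      ext j; simp [le_total (T j r) (T i r)]
    have hint : ({j : Fin (s + 1) | T j r ≤ T i r} ∩ {j : Fin (s + 1) | T i r ≤ T j r}) = {i} := by
      ext j
      simp only [Set.mem_inter_iff, Set.mem_setOf_eq, Set.mem_singleton_iff]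
      constructor
      · rintro ⟨h1, h2⟩
        by_contra hne
        exact hnoties r j i hne (le_antisymm h1 h2)
      · rintro rfl; exact ⟨le_refl _, le_refl _⟩
    have := Set.ncard_union_add_ncard_inter {j : Fin (s + 1) | T j r ≤ T i r}
      {j : Fin (s + 1) | T i r ≤ T j r}
    rw [hu, hint, Set.ncard_univ, Set.ncard_singleton] at this
    simp only [Nat.card_eq_fintype_card, Fintype.card_fin] at this
    rw [upRank, downRank]
    omega
  rw [Nat.le_div_iff_mul_le (by norm_num)]
  have : twoSidedRank T i r * 2 ≤ upRank T i r + downRank T i r := by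
    rw [twoSidedRank]; omega
  omega

lemma rankCount_eq_zero_of_lt {s : ℕ} {ι : Type*} [Fintype ι] [Nonempty ι]
    (T : Fin (s + 1) → ι → ℝ) (i : Fin (s + 1)) {k : ℕ} (hk : k < extremeRank T i) :
    rankCount T i k = 0 := by
  rw [rankCount, Set.ncard_eq_zero (Set.toFinite _)]
  ext r
  simp only [Set.mem_setOf_eq, Set.mem_empty_iff_false, iff_false]
  intro h
  have h2 := Finset.inf'_le (s := (univ : Finset ι)) (fun r => twoSidedRank T i r) (Finset.mem_univ r)
  rw [extremeRank] at hk
  omega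

lemma rankCount_extremeRank_pos {s : ℕ} {ι : Type*} [Fintype ι] [Nonempty ι]
    (T : Fin (s + 1) → ι → ℝ) (i : Fin (s + 1)) :
    0 < rankCount T i (extremeRank T i) := by
  obtain ⟨r, -, hr⟩ := Finset.exists_mem_eq_inf' (univ_nonempty) (fun r => twoSidedRank T i r)
  rw [rankCount, Set.ncard_pos (Set.toFinite _)]
  exact ⟨r, hr.symm⟩

lemma one_le_extremeRank {s : ℕ} {ι : Type*} [Fintype ι] [Nonempty ι]
    (T : Fin (s + 1) → ι → ℝ) (i : Fin (s + 1)) : 1 ≤ extremeRank T i := by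
  rw [extremeRank, Finset.le_inf'_iff]
  exact fun r _ => one_le_twoSidedRank T i r

lemma extremeRank_le {s : ℕ} {ι : Type*} [Fintype ι] [Nonempty ι]
    (T : Fin (s + 1) → ι → ℝ)
    (hnoties : ∀ r : ι, ∀ i j : Fin (s + 1), i ≠ j → T i r ≠ T j r)
    (i : Fin (s + 1)) : extremeRank T i ≤ (s + 2) / 2 := by
  obtain ⟨r⟩ := ‹Nonempty ι›
  exact le_trans (Finset.inf'_le _ (Finset.mem_univ r)) (twoSidedRank_le T hnoties i r)

/-- **The rank count p-value lies strictly inside the rank envelope p-interval.**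
With `p_- = #{i : R_i < R_1}/(s+1)`, `p_+ = #{i : R_i ≤ R_1}/(s+1)` and the rank count
p-value `p_N = (1 + #{i ∈ {2,…,s+1} : N_i ≺ N_1})/(s+1)`, it holds that
`p_- < p_N ≤ p_+`. -/
theorem rankCount_p_value_between
    {s : ℕ} (hs : 1 ≤ s) {ι : Type*} [Fintype ι] [Nonempty ι]
    (T : Fin (s + 1) → ι → ℝ)
    (hnoties : ∀ r : ι, ∀ i j : Fin (s + 1), i ≠ j → T i r ≠ T j r) :
    ({i : Fin (s + 1) | extremeRank T i < extremeRank T 0}.ncard : ℝ) / (s + 1) <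
        (1 + ({i : Fin (s + 1) | i ≠ 0 ∧ rankCountLT T i 0}).ncard : ℝ) / (s + 1) ∧
      (1 + ({i : Fin (s + 1) | i ≠ 0 ∧ rankCountLT T i 0}).ncard : ℝ) / (s + 1) ≤
        ({i : Fin (s + 1) | extremeRank T i ≤ extremeRank T 0}.ncard : ℝ) / (s + 1) := by
  have hsub1 : {i : Fin (s + 1) | extremeRank T i < extremeRank T 0} ⊆
      {i : Fin (s + 1) | i ≠ 0 ∧ rankCountLT T i 0} := by
    intro i hi
    simp only [Set.mem_setOf_eq] at hi ⊢
    constructor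
    · rintro rfl; omega
    · refine ⟨extremeRank T i, one_le_extremeRank T i, extremeRank_le T hnoties i, ?_, ?_⟩
      · intro k hk1 hk2
        rw [rankCount_eq_zero_of_lt T i hk2, rankCount_eq_zero_of_lt T 0 (by omega)]
      · rw [rankCount_eq_zero_of_lt T 0 hi]
        exact rankCount_extremeRank_pos T i
  have hsub2 : insert (0 : Fin (s + 1)) {i : Fin (s + 1) | i ≠ 0 ∧ rankCountLT T i 0} ⊆
      {i : Fin (s + 1) | extremeRank T i ≤ extremeRank T 0} := by
    rintro i (rfl | hi)
    · simp only [Set.mem_setOf_eq]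
      exact le_refl _
    · obtain ⟨hne, n, hn1, hn2, heq, hlt⟩ := hi
      simp only [Set.mem_setOf_eq]
      by_contra hgt
      push_neg at hgt
      have hEn : extremeRank T i ≤ n := by
        by_contra h
        push_neg at h
        rw [rankCount_eq_zero_of_lt T i h] at hlt
        omega
      have h0n : extremeRank T 0 < n := by omega
      have := heq (extremeRank T 0) (one_le_extremeRank T 0) h0n
      rw [rankCount_eq_zero_of_lt T i (by omega)] at this
      have := rankCount_extremeRank_pos T 0
      omega
  have h0notmem : (0 : Fin (s + 1)) ∉ {i : Fin (s + 1) | i ≠ 0 ∧ rankCountLT T i 0} := by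
    simp
  have hc1 : {i : Fin (s + 1) | extremeRank T i < extremeRank T 0}.ncard ≤
      {i : Fin (s + 1) | i ≠ 0 ∧ rankCountLT T i 0}.ncard :=
    Set.ncard_le_ncard hsub1 (Set.toFinite _)
  have hc2 : 1 + {i : Fin (s + 1) | i ≠ 0 ∧ rankCountLT T i 0}.ncard ≤
      {i : Fin (s + 1) | extremeRank T i ≤ extremeRank T 0}.ncard := by
    have := Set.ncard_le_ncard hsub2 (Set.toFinite _)
    rwa [Set.ncard_insert_of_notMem h0notmem (Set.toFinite _), add_comm] at this
  have hd : (0 : ℝ) < s + 1 := by positivity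
  constructor
  · gcongr
    have : ({i : Fin (s + 1) | extremeRank T i < extremeRank T 0}.ncard : ℝ) ≤
        ({i : Fin (s + 1) | i ≠ 0 ∧ rankCountLT T i 0}.ncard : ℝ) := by exact_mod_cast hc1
    linarith
  · gcongr
    exact_mod_cast hc2
end

section
/- (Probability that the observed extreme rank equals a symmetric function of the sample.) Let s ≥ 1, let I be a nonempty finite set, and let T_1, …, T_{s+1} be exchangeable random curves with values in ℝ^I (the space of functions I → ℝ with the product σ-algebra) such that almost surely there are no pointwise ties, i.e., for each r ∈ I the values T_1(r), …, T_{s+1}(r) are almost surely pairwise distinct. For each i define the extreme rank R_i = min_{r ∈ I} min(#{j : T_j(r) ≤ T_i(r)}, #{j : T_j(r) ≥ T_i(r)}). Let K : (ℝ^I)^{s+1} → ℕ be a measurable function that is invariant under every permutation of its s+1 arguments. Then P(R_1 = K(T_1, …, T_{s+1})) ≤ 2·|I|/(s+1). In particular, taking K equal to the critical rank k_α of the sample, the expected difference between the rank count test and the conservative rank envelope test is at most 2·|I|/(s+1). -/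
open MeasureTheory
open scoped ENNReal

open Finset

/- ### Auxiliary lemmas -/

lemma upRank_eq_card {s : ℕ} {ι : Type*} (f : Fin (s + 1) → ι → ℝ) (i : Fin (s + 1)) (r : ι) :
    upRank f i r = (univ.filter (fun j => f j r ≤ f i r)).card := by
  simp [upRank, Set.ncard_eq_toFinset_card', Set.toFinset_setOf]

lemma downRank_eq_card {s : ℕ} {ι : Type*} (f : Fin (s + 1) → ι → ℝ) (i : Fin (s + 1)) (r : ι) :
    downRank f i r = (univ.filter (fun j => f i r ≤ f j r)).card := by
  simp [downRank, Set.ncard_eq_toFinset_card', Set.toFinset_setOf]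

lemma measurable_finset_inf' {α β : Type*} [MeasurableSpace α] {t : Finset β} (ht : t.Nonempty)
    (g : β → α → ℕ) (hg : ∀ b, Measurable (g b)) :
    Measurable (fun a => t.inf' ht (fun b => g b a)) := by
  induction ht using Finset.Nonempty.cons_induction with
  | singleton b => simpa using hg b
  | cons b t hb htne ih =>
    have : (fun a => (Finset.cons b t hb).inf' (Finset.cons_nonempty hb) (fun c => g c a))
        = fun a => min (g b a) (t.inf' htne (fun c => g c a)) := by
      funext a; rw [Finset.inf'_cons]
    simpa [this] using (hg b).min ih

lemma measurable_upRank {s : ℕ} {ι : Type*} [Fintype ι] (i : Fin (s + 1)) (r : ι) :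
    Measurable (fun f : Fin (s + 1) → ι → ℝ => upRank f i r) := by
  classical
  have h : (fun f : Fin (s + 1) → ι → ℝ => upRank f i r)
      = fun f => ∑ j : Fin (s + 1), if f j r ≤ f i r then 1 else 0 := by
    funext f; rw [upRank_eq_card, Finset.card_filter]
  rw [h]
  refine Finset.measurable_sum _ (fun j _ => ?_)
  have hm : MeasurableSet {f : Fin (s + 1) → ι → ℝ | f j r ≤ f i r} :=
    measurableSet_le ((measurable_pi_apply r).comp (measurable_pi_apply j))
      ((measurable_pi_apply r).comp (measurable_pi_apply i))
  exact Measurable.ite hm measurable_const measurable_const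

lemma measurable_downRank {s : ℕ} {ι : Type*} [Fintype ι] (i : Fin (s + 1)) (r : ι) :
    Measurable (fun f : Fin (s + 1) → ι → ℝ => downRank f i r) := by
  classical
  have h : (fun f : Fin (s + 1) → ι → ℝ => downRank f i r)
      = fun f => ∑ j : Fin (s + 1), if f i r ≤ f j r then 1 else 0 := by
    funext f; rw [downRank_eq_card, Finset.card_filter]
  rw [h]
  refine Finset.measurable_sum _ (fun j _ => ?_)
  have hm : MeasurableSet {f : Fin (s + 1) → ι → ℝ | f i r ≤ f j r} :=
    measurableSet_le ((measurable_pi_apply r).comp (measurable_pi_apply i))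
      ((measurable_pi_apply r).comp (measurable_pi_apply j))
  exact Measurable.ite hm measurable_const measurable_const

lemma measurable_extremeRank {s : ℕ} {ι : Type*} [Fintype ι] [Nonempty ι] (i : Fin (s + 1)) :
    Measurable (fun f : Fin (s + 1) → ι → ℝ => extremeRank f i) :=
  measurable_finset_inf' univ_nonempty (fun r f => twoSidedRank f i r)
    (fun r => (measurable_upRank i r).min (measurable_downRank i r))

lemma upRank_lt_of_lt {s : ℕ} {ι : Type*} {f : Fin (s + 1) → ι → ℝ} {r : ι}
    {a b : Fin (s + 1)} (hab : f a r < f b r) : upRank f a r < upRank f b r := by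
  classical
  rw [upRank_eq_card, upRank_eq_card]
  apply Finset.card_lt_card
  rw [Finset.ssubset_iff_of_subset]
  · exact ⟨b, Finset.mem_filter.mpr ⟨Finset.mem_univ _, le_refl _⟩,
      by simp [Finset.mem_filter, not_le.mpr hab]⟩
  · intro k hk
    simp only [Finset.mem_filter] at *
    exact ⟨hk.1, hk.2.trans hab.le⟩

lemma downRank_lt_of_lt {s : ℕ} {ι : Type*} {f : Fin (s + 1) → ι → ℝ} {r : ι}
    {a b : Fin (s + 1)} (hab : f a r < f b r) : downRank f b r < downRank f a r := by
  classical
  rw [downRank_eq_card, downRank_eq_card]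
  apply Finset.card_lt_card
  rw [Finset.ssubset_iff_of_subset]
  · exact ⟨a, Finset.mem_filter.mpr ⟨Finset.mem_univ _, le_refl _⟩,
      by simp [Finset.mem_filter, not_le.mpr hab]⟩
  · intro k hk
    simp only [Finset.mem_filter] at *
    exact ⟨hk.1, hab.le.trans hk.2⟩

lemma upRank_injective {s : ℕ} {ι : Type*} {f : Fin (s + 1) → ι → ℝ} {r : ι}
    (hf : ∀ i j : Fin (s + 1), i ≠ j → f i r ≠ f j r) {i j : Fin (s + 1)}
    (h : upRank f i r = upRank f j r) : i = j := by
  by_contra hne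
  rcases lt_trichotomy (f i r) (f j r) with h1 | h1 | h1
  · exact absurd h (Nat.ne_of_lt (upRank_lt_of_lt h1))
  · exact hf i j hne h1
  · exact absurd h (Nat.ne_of_gt (upRank_lt_of_lt h1))

lemma downRank_injective {s : ℕ} {ι : Type*} {f : Fin (s + 1) → ι → ℝ} {r : ι}
    (hf : ∀ i j : Fin (s + 1), i ≠ j → f i r ≠ f j r) {i j : Fin (s + 1)}
    (h : downRank f i r = downRank f j r) : i = j := by
  by_contra hne
  rcases lt_trichotomy (f i r) (f j r) with h1 | h1 | h1
  · exact absurd h (Nat.ne_of_gt (downRank_lt_of_lt h1))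
  · exact hf i j hne h1
  · exact absurd h (Nat.ne_of_lt (downRank_lt_of_lt h1))

/-- Counting lemma: if there are no pointwise ties, at most `2 |ι|` indices can share a
given extreme rank value. -/
lemma card_extremeRank_eq_le {s : ℕ} {ι : Type*} [Fintype ι] [Nonempty ι]
    (f : Fin (s + 1) → ι → ℝ) (hf : ∀ r : ι, ∀ i j : Fin (s + 1), i ≠ j → f i r ≠ f j r)
    (c : ℕ) :
    (univ.filter (fun i : Fin (s + 1) => extremeRank f i = c)).card ≤ 2 * Fintype.card ι := by
  classical
  have hwit : ∀ i : Fin (s + 1), ∃ r : ι, extremeRank f i = twoSidedRank f i r := by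
    intro i
    obtain ⟨r, _, hr⟩ := Finset.exists_mem_eq_inf' (univ_nonempty (α := ι))
      (fun r => twoSidedRank f i r)
    exact ⟨r, hr⟩
  choose w hw using hwit
  have hcard : (Finset.univ : Finset (ι × Bool)).card = 2 * Fintype.card ι := by
    simp [Fintype.card_prod, mul_comm]
  rw [← hcard]
  apply Finset.card_le_card_of_injOn
    (fun i => (w i, decide (upRank f i (w i) ≤ downRank f i (w i))))
  · intro _ _; exact Finset.mem_univ _
  · intro i hi j hj hg
    simp only [Finset.coe_filter, Set.mem_setOf_eq, Finset.mem_univ, true_and] at hi hj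
    have h1 : w i = w j := congrArg Prod.fst hg
    have h2 : (upRank f i (w i) ≤ downRank f i (w i)) ↔
        (upRank f j (w j) ≤ downRank f j (w j)) :=
      decide_eq_decide.mp (congrArg Prod.snd hg)
    have hi' : min (upRank f i (w i)) (downRank f i (w i)) = c := (hw i).symm.trans hi
    have hj' : min (upRank f j (w j)) (downRank f j (w j)) = c := (hw j).symm.trans hj
    by_cases hp : upRank f i (w i) ≤ downRank f i (w i)
    · rw [min_eq_left hp] at hi'
      rw [min_eq_left (h2.mp hp)] at hj'
      refine upRank_injective (hf (w i)) ?_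
      rw [hi', h1, hj']
    · rw [min_eq_right (le_of_not_ge hp)] at hi'
      rw [min_eq_right (le_of_not_ge (fun hq => hp (h2.mpr hq)))] at hj'
      refine downRank_injective (hf (w i)) ?_
      rw [hi', h1, hj']

lemma upRank_comp_perm {s : ℕ} {ι : Type*} (f : Fin (s + 1) → ι → ℝ)
    (σ : Equiv.Perm (Fin (s + 1))) (i : Fin (s + 1)) (r : ι) :
    upRank (fun j => f (σ j)) i r = upRank f (σ i) r := by
  unfold upRank
  have h : {j | f (σ j) r ≤ f (σ i) r} = σ ⁻¹' {j | f j r ≤ f (σ i) r} := rfl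
  rw [h, ← Equiv.image_symm_eq_preimage, Set.ncard_image_of_injective _ (Equiv.injective _)]

lemma downRank_comp_perm {s : ℕ} {ι : Type*} (f : Fin (s + 1) → ι → ℝ)
    (σ : Equiv.Perm (Fin (s + 1))) (i : Fin (s + 1)) (r : ι) :
    downRank (fun j => f (σ j)) i r = downRank f (σ i) r := by
  unfold downRank
  have h : {j | f (σ i) r ≤ f (σ j) r} = σ ⁻¹' {j | f (σ i) r ≤ f j r} := rfl
  rw [h, ← Equiv.image_symm_eq_preimage, Set.ncard_image_of_injective _ (Equiv.injective _)]

lemma extremeRank_comp_perm {s : ℕ} {ι : Type*} [Fintype ι] [Nonempty ι]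
    (f : Fin (s + 1) → ι → ℝ) (σ : Equiv.Perm (Fin (s + 1))) (i : Fin (s + 1)) :
    extremeRank (fun j => f (σ j)) i = extremeRank f (σ i) := by
  unfold extremeRank
  apply Finset.inf'_congr _ rfl
  intro r _
  unfold twoSidedRank
  rw [upRank_comp_perm, downRank_comp_perm]

/-- **Probability that the observed extreme rank equals a symmetric function of the
sample.** Let `s ≥ 1`, `I` a nonempty finite set, and `T_1, …, T_{s+1}` exchangeable
random curves with values in `ℝ^I` such that almost surely there are no pointwise ties.
Let `K : (ℝ^I)^{s+1} → ℕ` be a measurable function invariant under every permutation of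
its `s+1` arguments. Then `P(R_1 = K(T_1, …, T_{s+1})) ≤ 2·|I|/(s+1)`. -/
theorem prob_extremeRank_eq_symmetric_le
    {Ω : Type*} [MeasurableSpace Ω] (P : Measure Ω) [IsProbabilityMeasure P]
    {s : ℕ} (hs : 1 ≤ s) {ι : Type*} [Fintype ι] [Nonempty ι]
    (T : Fin (s + 1) → Ω → ι → ℝ)
    (hmeas : ∀ i, Measurable (T i))
    (hexch : ∀ σ : Equiv.Perm (Fin (s + 1)),
      Measure.map (fun ω (i : Fin (s + 1)) => T (σ i) ω) P =
        Measure.map (fun ω (i : Fin (s + 1)) => T i ω) P)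
    (hnoties : ∀ᵐ ω ∂P, ∀ r : ι, ∀ i j : Fin (s + 1), i ≠ j → T i ω r ≠ T j ω r)
    (K : (Fin (s + 1) → ι → ℝ) → ℕ)
    (hKmeas : Measurable K)
    (hKinv : ∀ (σ : Equiv.Perm (Fin (s + 1))) (f : Fin (s + 1) → ι → ℝ),
      K (fun i => f (σ i)) = K f) :
    P {ω | extremeRank (fun i => T i ω) 0 = K (fun i => T i ω)} ≤
      (2 * Fintype.card ι : ℝ≥0∞) / (s + 1) := by
  classical
  set X : Ω → (Fin (s + 1) → ι → ℝ) := fun ω i => T i ω with hXdef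
  have hXmeas : Measurable X := measurable_pi_lambda _ (fun i => hmeas i)
  set A : Fin (s + 1) → Set (Fin (s + 1) → ι → ℝ) :=
    fun i => {f | extremeRank f i = K f} with hAdef
  have hAmeas : ∀ i, MeasurableSet (A i) := fun i =>
    measurableSet_eq_fun (measurable_extremeRank i) hKmeas
  set E : Fin (s + 1) → Set Ω := fun i => X ⁻¹' A i with hEdef
  have hEmeas : ∀ i, MeasurableSet (E i) := fun i => hXmeas (hAmeas i)
  set μ : Measure (Fin (s + 1) → ι → ℝ) := Measure.map X P with hμdef
  have hμA : ∀ i, μ (A i) = P (E i) := fun i => Measure.map_apply hXmeas (hAmeas i)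
  -- exchangeability: all the `μ (A i)` agree
  have hperm : ∀ i : Fin (s + 1), μ (A i) = μ (A 0) := by
    intro i
    set σ : Equiv.Perm (Fin (s + 1)) := Equiv.swap 0 i with hσ
    have hpm : Measurable (fun f : Fin (s + 1) → ι → ℝ => fun j => f (σ j)) :=
      measurable_pi_lambda _ (fun j => measurable_pi_apply (σ j))
    have hmm : Measure.map (fun f : Fin (s + 1) → ι → ℝ => fun j => f (σ j)) μ = μ := by
      rw [hμdef, Measure.map_map hpm hXmeas]
      exact hexch σ
    have hpre : (fun f : Fin (s + 1) → ι → ℝ => fun j => f (σ j)) ⁻¹' (A 0) = A i := by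
      ext f
      simp only [hAdef, Set.mem_preimage, Set.mem_setOf_eq]
      rw [extremeRank_comp_perm f σ 0, hKinv σ f, hσ, Equiv.swap_apply_left]
    calc μ (A i) = μ ((fun f : Fin (s + 1) → ι → ℝ => fun j => f (σ j)) ⁻¹' (A 0)) := by
            rw [hpre]
      _ = (Measure.map (fun f : Fin (s + 1) → ι → ℝ => fun j => f (σ j)) μ) (A 0) :=
            (Measure.map_apply hpm (hAmeas 0)).symm
      _ = μ (A 0) := by rw [hmm]
  -- sum of the probabilities equals the integral of the count
  have hsum_eq : ∑ i : Fin (s + 1), P (E i)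
      = ∫⁻ ω, ((univ.filter (fun i : Fin (s + 1) => ω ∈ E i)).card : ℝ≥0∞) ∂P := by
    have h1 : ∀ i : Fin (s + 1), P (E i) = ∫⁻ ω, (E i).indicator 1 ω ∂P :=
      fun i => (lintegral_indicator_one (hEmeas i)).symm
    rw [Finset.sum_congr rfl (fun i _ => h1 i), ← lintegral_finset_sum]
    · apply lintegral_congr
      intro ω
      rw [Finset.card_filter, Nat.cast_sum]
      apply Finset.sum_congr rfl
      intro i _
      by_cases h : ω ∈ E i <;> simp [h, Set.indicator_of_mem, Set.indicator_of_notMem]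
    · exact fun i _ => measurable_one.indicator (hEmeas i)
  -- a.e. bound on the count
  have hbound : ∫⁻ ω, ((univ.filter (fun i : Fin (s + 1) => ω ∈ E i)).card : ℝ≥0∞) ∂P
      ≤ 2 * Fintype.card ι := by
    have hle : ∀ᵐ ω ∂P, ((univ.filter (fun i : Fin (s + 1) => ω ∈ E i)).card : ℝ≥0∞)
        ≤ (2 * Fintype.card ι : ℕ) := by
      filter_upwards [hnoties] with ω hω
      have : (univ.filter (fun i : Fin (s + 1) => ω ∈ E i)).card ≤ 2 * Fintype.card ι := by
        have heq : (univ.filter (fun i : Fin (s + 1) => ω ∈ E i))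
            = univ.filter (fun i : Fin (s + 1) => extremeRank (X ω) i = K (X ω)) := by
          apply Finset.filter_congr
          intro i _
          simp only [E, A, Set.mem_preimage, Set.mem_setOf_eq]
        rw [heq]
        exact card_extremeRank_eq_le (X ω) (fun r i j hij => hω r i j hij) (K (X ω))
      exact_mod_cast this
    calc ∫⁻ ω, ((univ.filter (fun i : Fin (s + 1) => ω ∈ E i)).card : ℝ≥0∞) ∂P
        ≤ ∫⁻ _, ((2 * Fintype.card ι : ℕ) : ℝ≥0∞) ∂P := lintegral_mono_ae hle
      _ = ((2 * Fintype.card ι : ℕ) : ℝ≥0∞) := by simp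
      _ = 2 * Fintype.card ι := by push_cast; ring
  -- combine
  have hmain : ((s : ℝ≥0∞) + 1) * P (E 0) ≤ 2 * Fintype.card ι := by
    have h2 : ∑ i : Fin (s + 1), P (E i) = ((s : ℝ≥0∞) + 1) * P (E 0) := by
      have : ∀ i : Fin (s + 1), P (E i) = P (E 0) := by
        intro i
        rw [← hμA i, ← hμA 0, hperm i]
      rw [Finset.sum_congr rfl (fun i _ => this i), Finset.sum_const, Finset.card_univ,
        Fintype.card_fin, nsmul_eq_mul]
      push_cast
      ring
    rw [← h2, hsum_eq]
    exact hbound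
  have hgoal : P {ω | extremeRank (fun i => T i ω) 0 = K (fun i => T i ω)} = P (E 0) := rfl
  rw [hgoal, ENNReal.le_div_iff_mul_le]
  · rw [mul_comm] at hmain
    exact_mod_cast hmain
  · left
    simp
  · left
    exact (ENNReal.add_lt_top.mpr ⟨ENNReal.natCast_lt_top s, ENNReal.one_lt_top⟩).ne
end
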